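/- Let X be a finite set and 𝒞 ⊆ 𝒫(X) a d-maximum set system with |X| ≥ d+1. For each A ⊆ X with |A| = d+1, let C_A denote the forbidden label of 𝒞 on A. Then for every B ⊆ X: B ∈ 𝒞 if and only if for every A ⊆ X with |A| = d+1, B ∩ A ≠ C_A. -/

import Mathlib

open Set

variable {α : Type*}

/-- The trace of a set system on a set `A`. -/
def trace (𝒞 : Set (Set α)) (A : Set α) : Set (Set α) := {s | ∃ C ∈ 𝒞, s = C ∩ A}

/-- `∑_{i=0}^{d} (n choose i)`. -/
def binLe (n d : ℕ) : ℕ := ∑ i ∈ Finset.range (d + 1), n.choose i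

/-- `𝒞` shatters `A`. -/
def shatters (𝒞 : Set (Set α)) (A : Set α) : Prop := ∀ B ⊆ A, ∃ C ∈ 𝒞, C ∩ A = B

/-- `𝒞` is a `d`-maximum set system. -/
def isMaximum (𝒞 : Set (Set α)) (d : ℕ) : Prop :=
  ∀ A : Set α, A.Finite → (trace 𝒞 A).ncard = binLe A.ncard d

/-- There is a ladder of length `n` for `𝒞`. -/
def hasLadder (𝒞 : Set (Set α)) (n : ℕ) : Prop :=
  ∃ (x : Fin n → α) (B : Fin n → Set α), (∀ j, B j ∈ 𝒞) ∧ ∀ i j, x i ∈ B j ↔ i < j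

/-- Floyd's characterization of a maximum class by its forbidden labels. -/
theorem floyd_forbidden_labels [Fintype α] (𝒞 : Set (Set α)) (d : ℕ)
    (hmax : isMaximum 𝒞 d) (hbig : d + 1 ≤ Fintype.card α)
    (Cf : Set α → Set α)
    (hCf : ∀ A : Set α, A.ncard = d + 1 → Cf A ⊆ A ∧ Cf A ∉ trace 𝒞 A) :
    ∀ B : Set α, B ∈ 𝒞 ↔ ∀ A : Set α, A.ncard = d + 1 → B ∩ A ≠ Cf A := by
  classical
  set 𝒟 : Set (Set α) := {B | ∀ A : Set α, A.ncard = d + 1 → B ∩ A ≠ Cf A} with h𝒟def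
  have hsub : 𝒞 ⊆ 𝒟 := by
    intro B hB A hA heq
    exact (hCf A hA).2 ⟨B, hB, heq.symm⟩
  -- |𝒞| = binLe n d
  have hC : 𝒞.ncard = binLe (Fintype.card α) d := by
    have h := hmax Set.univ Set.finite_univ
    rw [Set.ncard_univ, Nat.card_eq_fintype_card] at h
    rw [← h]
    congr 1
    ext s
    simp [trace]
  -- Finset version of 𝒟
  set 𝒜 : Finset (Finset α) := Finset.univ.filter (fun s : Finset α => (↑s : Set α) ∈ 𝒟)
    with h𝒜def
  have h𝒟eq : 𝒟 = ↑(𝒜.image ((↑·) : Finset α → Set α)) := by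
    ext B
    simp only [Finset.coe_image, Set.mem_image, Finset.mem_coe, h𝒜def,
      Finset.mem_filter, Finset.mem_univ, true_and]
    constructor
    · intro hB
      exact ⟨B.toFinset, by rwa [Set.coe_toFinset], by rw [Set.coe_toFinset]⟩
    · rintro ⟨s, hs, rfl⟩
      exact hs
  have h𝒟card : 𝒟.ncard = 𝒜.card := by
    rw [h𝒟eq, Set.ncard_coe_finset,
      Finset.card_image_of_injective _ Finset.coe_injective]
  -- 𝒜 shatters no set of size d+1
  have hshat : ∀ s ∈ 𝒜.shatterer, s.card ≤ d := by
    intro s hs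
    by_contra h
    push_neg at h
    obtain ⟨t, hts, htcard⟩ := Finset.exists_subset_card_eq (Nat.succ_le_of_lt h)
    have hsh : 𝒜.Shatters t := (Finset.mem_shatterer.1 hs).mono_right hts
    have htA : (↑t : Set α).ncard = d + 1 := by
      rw [Set.ncard_coe_finset]; exact htcard
    have hCfsub : Cf ↑t ⊆ (↑t : Set α) := (hCf _ htA).1
    have hsubfin : (Cf ↑t).toFinset ⊆ t := by
      rw [Set.toFinset_subset]; exact_mod_cast hCfsub
    obtain ⟨u, hu𝒜, hut⟩ := hsh hsubfin
    have hu𝒟 : (↑u : Set α) ∈ 𝒟 := by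
      simpa [h𝒜def] using hu𝒜
    apply hu𝒟 ↑t htA
    have : ((↑(t ∩ u) : Set α)) = ↑((Cf ↑t).toFinset) := by rw [hut]
    rw [Finset.coe_inter, Set.coe_toFinset] at this
    rw [Set.inter_comm]
    exact this
  -- Sauer–Shelah bound
  have h𝒜card : 𝒜.card ≤ binLe (Fintype.card α) d := by
    calc 𝒜.card ≤ 𝒜.shatterer.card := Finset.card_le_card_shatterer 𝒜
      _ ≤ ((Finset.range (d + 1)).biUnion
            (fun i => Finset.univ.powersetCard i)).card := by
          apply Finset.card_le_card
          intro s hs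
          simp only [Finset.mem_biUnion, Finset.mem_range, Finset.mem_powersetCard]
          exact ⟨s.card, Nat.lt_succ_of_le (hshat s hs), Finset.subset_univ s, rfl⟩
      _ = binLe (Fintype.card α) d := by
          rw [Finset.card_biUnion]
          · simp [binLe, Finset.card_powersetCard]
          · intro i hi j hj hij
            rw [Function.onFun, Finset.disjoint_left]
            intro s hsi hsj
            rw [Finset.mem_powersetCard] at hsi hsj
            exact hij (hsi.2 ▸ hsj.2)
  -- conclude 𝒞 = 𝒟
  have hle : 𝒟.ncard ≤ 𝒞.ncard := by
    rw [h𝒟card, hC]; exact h𝒜card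
  have heq : 𝒞 = 𝒟 := Set.eq_of_subset_of_ncard_le hsub hle (Set.toFinite 𝒟)
  intro B
  rw [heq]
  rfl
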